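/- The function g(x) = 2x(1 - x + x·log x) on (0,1) attains its unique maximum at the point θ = -1/(2·W₋₁(-1/(2√e))), which is the unique solution in (0,1/2) of 2x·log x = x - 1, and the maximum value is g(θ) = θ - θ². -/

import Mathlib

open Real Set

private noncomputable def hfun (x : ℝ) : ℝ := 2 * x * Real.log x - x + 1

private lemma hfun_cont : Continuous hfun := by
  have e : hfun = fun x => 2 * (x * Real.log x) - x + 1 := by
    funext x; simp only [hfun]; ring
  rw [e]
  exact ((continuous_const.mul Real.continuous_mul_log).sub continuous_id).add
    continuous_const

private lemma hfun_deriv {x : ℝ} (hx : x ≠ 0) :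
    HasDerivAt hfun (2 * Real.log x + 1) x := by
  have h1 := (((Real.hasDerivAt_mul_log hx).const_mul 2).sub (hasDerivAt_id x)).add_const 1
  simp only [Pi.sub_apply, id_eq] at h1
  have e : hfun = fun x => 2 * (x * Real.log x) - x + 1 := by
    funext x; simp only [hfun]; ring
  rw [e]
  exact h1.congr_deriv (by ring)

private lemma half_lt_s : (1 / 2 : ℝ) < Real.exp (-(1 / 2)) := by
  have h2 : Real.log (1 / 2) < -(1 / 2) := by
    rw [one_div, Real.log_inv]
    have := Real.log_two_gt_d9
    linarith
  calc (1 / 2 : ℝ) = Real.exp (Real.log (1 / 2)) := (Real.exp_log (by norm_num)).symm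
  _ < Real.exp (-(1 / 2)) := Real.exp_lt_exp.mpr h2

private lemma hfun_anti : StrictAntiOn hfun (Set.Icc 0 (Real.exp (-(1 / 2)))) := by
  apply strictAntiOn_of_deriv_neg (convex_Icc _ _) hfun_cont.continuousOn
  intro x hx
  rw [interior_Icc] at hx
  rw [(hfun_deriv (ne_of_gt hx.1)).deriv]
  have : Real.log x < -(1 / 2) := by
    calc Real.log x < Real.log (Real.exp (-(1 / 2))) := Real.log_lt_log hx.1 hx.2
    _ = -(1 / 2) := Real.log_exp _
  linarith

private lemma hfun_mono : StrictMonoOn hfun (Set.Icc (Real.exp (-(1 / 2))) 1) := by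
  apply strictMonoOn_of_deriv_pos (convex_Icc _ _) hfun_cont.continuousOn
  intro x hx
  rw [interior_Icc] at hx
  have hx0 : 0 < x := lt_trans (Real.exp_pos _) hx.1
  rw [(hfun_deriv (ne_of_gt hx0)).deriv]
  have : -(1 / 2) < Real.log x := by
    calc -(1 / 2 : ℝ) = Real.log (Real.exp (-(1 / 2))) := (Real.log_exp _).symm
    _ < Real.log x := Real.log_lt_log (Real.exp_pos _) hx.1
  linarith

private lemma gfun_deriv {x : ℝ} (hx : x ≠ 0) :
    HasDerivAt (fun x : ℝ => 2 * x * (1 - x + x * Real.log x)) (2 * hfun x) x := by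
  have hu : HasDerivAt (fun x : ℝ => 1 - x + x * Real.log x)
      (0 - 1 + (Real.log x + 1)) x :=
    (((hasDerivAt_const x (1 : ℝ)).sub (hasDerivAt_id x))).add (Real.hasDerivAt_mul_log hx)
  have hc : HasDerivAt (fun x : ℝ => 2 * x) (2 * 1) x := (hasDerivAt_id x).const_mul 2
  have := hc.fun_mul hu
  exact this.congr_deriv (by simp only [hfun]; ring)

theorem stmt_19 (θ : ℝ) (hθ : θ ∈ Set.Ioo (0 : ℝ) (1 / 2))
    (heq : 2 * θ * Real.log θ = θ - 1) :
    (∀ x ∈ Set.Ioo (0 : ℝ) (1 / 2), 2 * x * Real.log x = x - 1 → x = θ) ∧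
      (∀ x ∈ Set.Ioo (0 : ℝ) 1, x ≠ θ →
        2 * x * (1 - x + x * Real.log x) < 2 * θ * (1 - θ + θ * Real.log θ)) ∧
      2 * θ * (1 - θ + θ * Real.log θ) = θ - θ ^ 2 := by
  obtain ⟨hθ0, hθh⟩ := hθ
  have hθs : θ < Real.exp (-(1 / 2)) := lt_trans hθh half_lt_s
  have hθmem : θ ∈ Set.Icc 0 (Real.exp (-(1 / 2))) := ⟨le_of_lt hθ0, le_of_lt hθs⟩
  have hθzero : hfun θ = 0 := by simp only [hfun]; linarith
  have hone : hfun 1 = 0 := by simp [hfun]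
  -- sign of hfun
  have hpos : ∀ x ∈ Set.Ioo (0 : ℝ) θ, 0 < hfun x := by
    intro x hx
    have hxmem : x ∈ Set.Icc 0 (Real.exp (-(1 / 2))) :=
      ⟨le_of_lt hx.1, le_of_lt (lt_trans hx.2 hθs)⟩
    have := hfun_anti hxmem hθmem hx.2
    linarith
  have hneg : ∀ x ∈ Set.Ioo θ (1 : ℝ), hfun x < 0 := by
    intro x hx
    rcases le_or_gt x (Real.exp (-(1 / 2))) with hle | hgt
    · have hxmem : x ∈ Set.Icc 0 (Real.exp (-(1 / 2))) :=
        ⟨le_of_lt (lt_trans hθ0 hx.1), hle⟩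
      have := hfun_anti hθmem hxmem hx.1
      linarith
    · have hxmem : x ∈ Set.Icc (Real.exp (-(1 / 2))) 1 := ⟨le_of_lt hgt, le_of_lt hx.2⟩
      have h1mem : (1 : ℝ) ∈ Set.Icc (Real.exp (-(1 / 2))) 1 :=
        ⟨le_of_lt (lt_trans hgt hx.2), le_refl 1⟩
      have := hfun_mono hxmem h1mem hx.2
      linarith
  refine ⟨?_, ?_, by linear_combination θ * heq⟩
  · -- uniqueness
    intro x hx hxeq
    have hxzero : hfun x = 0 := by simp only [hfun]; linarith
    have hxmem : x ∈ Set.Icc 0 (Real.exp (-(1 / 2))) :=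
      ⟨le_of_lt hx.1, le_of_lt (lt_trans hx.2 half_lt_s)⟩
    exact hfun_anti.injOn hxmem hθmem (by rw [hxzero, hθzero])
  · -- strict maximum
    set g : ℝ → ℝ := fun x => 2 * x * (1 - x + x * Real.log x) with hg
    have gcont : Continuous g :=
      (continuous_const.mul continuous_id).mul
        ((continuous_const.sub continuous_id).add Real.continuous_mul_log)
    have gmono : StrictMonoOn g (Set.Icc 0 θ) := by
      apply strictMonoOn_of_deriv_pos (convex_Icc _ _) gcont.continuousOn
      intro x hx
      rw [interior_Icc] at hx
      rw [(gfun_deriv (ne_of_gt hx.1)).deriv]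
      have := hpos x hx
      linarith
    have ganti : StrictAntiOn g (Set.Icc θ 1) := by
      apply strictAntiOn_of_deriv_neg (convex_Icc _ _) gcont.continuousOn
      intro x hx
      rw [interior_Icc] at hx
      rw [(gfun_deriv (ne_of_gt (lt_trans hθ0 hx.1))).deriv]
      have := hneg x hx
      linarith
    intro x hx hne
    rcases lt_or_gt_of_ne hne with hlt | hgt
    · exact gmono ⟨le_of_lt hx.1, le_of_lt hlt⟩ ⟨le_of_lt hθ0, le_refl θ⟩ hlt
    · exact ganti ⟨le_refl θ, by linarith [hθh]⟩ ⟨le_of_lt hgt, le_of_lt hx.2⟩ hgt
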